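/- Let M be a type, F : M → Prop, n : ℕ, and t : Fin n → M. For m : ℕ let NDT(m) be the statement: for every S : Finset (Fin n) with S.card = m, either ¬ F (t i) for some i ∈ S, or t i = t j for some i, j ∈ S with i ≠ j. Then (∃ x : M, F x ∧ ∀ i : Fin n, x ≠ t i) if and only if ((at least 1 element satisfies F) ∧ ∀ m, 1 ≤ m → m ≤ n → ((at least m+1 elements satisfy F) ∨ NDT(m))). -/

import Mathlib

/-- At least `k` elements of `M` satisfy `F`: semantics of the counting
quantifier `∃^{≥k} x F(x)`. -/
def AtLeast (M : Type*) (k : ℕ) (F : M → Prop) : Prop :=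
  ∃ f : Fin k → M, Function.Injective f ∧ ∀ i, F (f i)

/-- `NDT F t m`: it is false that `F` holds of `m` pairwise distinct individuals
among the values `t i`. -/
def NDT {M : Type*} (F : M → Prop) {n : ℕ} (t : Fin n → M) (m : ℕ) : Prop :=
  ∀ S : Finset (Fin n), S.card = m →
    (∃ i ∈ S, ¬ F (t i)) ∨ ∃ i ∈ S, ∃ j ∈ S, i ≠ j ∧ t i = t j

theorem auxiliary_elimination_conjunctive (M : Type*) (F : M → Prop) (n : ℕ) (t : Fin n → M) :
    (∃ x : M, F x ∧ ∀ i : Fin n, x ≠ t i) ↔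
      (AtLeast M 1 F ∧ ∀ m : ℕ, 1 ≤ m → m ≤ n → (AtLeast M (m + 1) F ∨ NDT F t m)) := by
  classical
  constructor
  · rintro ⟨x, hF, hx⟩
    refine ⟨⟨fun _ => x, fun a b _ => Subsingleton.elim a b, fun _ => hF⟩, ?_⟩
    intro m _ _
    by_cases hndt : NDT F t m
    · exact Or.inr hndt
    · left
      unfold NDT at hndt
      push_neg at hndt
      obtain ⟨S, hScard, hF', hinj⟩ := hndt
      refine ⟨fun i => if h : (i : ℕ) < m then t (S.orderIsoOfFin hScard ⟨i, h⟩) else x,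
        ?_, ?_⟩
      · intro a b hab
        by_cases ha : (a : ℕ) < m <;> by_cases hb : (b : ℕ) < m <;>
            simp only [ha, hb, dif_pos, dif_neg, not_false_iff] at hab
        · by_contra hne
          have h1 : (S.orderIsoOfFin hScard ⟨a, ha⟩ : Fin n) ≠
              (S.orderIsoOfFin hScard ⟨b, hb⟩ : Fin n) := by
            intro h
            apply hne
            have h2 := (S.orderIsoOfFin hScard).injective (Subtype.ext h)
            rw [Fin.mk.injEq] at h2
            exact Fin.ext h2
          exact hinj _ (S.orderIsoOfFin hScard ⟨a, ha⟩).2 _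
            (S.orderIsoOfFin hScard ⟨b, hb⟩).2 h1 hab
        · exact absurd hab.symm (hx _)
        · exact absurd hab (hx _)
        · have := a.2; have := b.2; exact Fin.ext (by omega)
      · intro i
        by_cases h : (i : ℕ) < m
        · simp only [h, dif_pos]
          exact hF' _ (S.orderIsoOfFin hScard ⟨i, h⟩).2
        · simp only [h, dif_neg, not_false_iff]
          exact hF
  · rintro ⟨⟨f1, _, hf1⟩, hall⟩
    by_contra hno
    push_neg at hno
    -- hno : ∀ x, F x → ∃ i, x = t i
    set T : Finset (Fin n) := Finset.univ.filter (fun i => F (t i)) with hT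
    set V : Finset M := T.image t with hV
    set m : ℕ := V.card with hm
    have hmem : ∀ x : M, F x → x ∈ V := by
      intro x hFx
      obtain ⟨i, hi⟩ := hno x hFx
      refine Finset.mem_image.mpr ⟨i, ?_, hi.symm⟩
      simp [hT, hi ▸ hFx]
    have hm1 : 1 ≤ m := by
      have : f1 0 ∈ V := hmem _ (hf1 0)
      have : V.Nonempty := ⟨_, this⟩
      exact Finset.card_pos.mpr this
    have hmn : m ≤ n := by
      calc m ≤ T.card := Finset.card_image_le
        _ ≤ (Finset.univ : Finset (Fin n)).card := Finset.card_le_card (Finset.filter_subset _ _)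
        _ = n := by simp
    rcases hall m hm1 hmn with ⟨g, hginj, hgF⟩ | hndt
    · have : Fintype.card (Fin (m + 1)) ≤ Fintype.card ↥V :=
        Fintype.card_le_of_injective (fun i => (⟨g i, hmem _ (hgF i)⟩ : ↥V))
          (fun a b hab => hginj (congrArg Subtype.val hab))
      simp [Fintype.card_coe] at this
      omega
    · -- build a section S of V
      have hsec : ∀ v : ↥V, ∃ i, i ∈ T ∧ t i = (v : M) := by
        intro v; exact Finset.mem_image.mp v.2
      choose sec hsecT hsect using hsec
      set S : Finset (Fin n) := V.attach.image sec with hS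
      have hsecinj : ∀ a b : ↥V, sec a = sec b → a = b := by
        intro a b hab
        apply Subtype.ext
        rw [← hsect a, ← hsect b, hab]
      have hScard : S.card = m := by
        rw [hS, Finset.card_image_of_injective _ (fun a b => hsecinj a b), Finset.card_attach]
      rcases hndt S hScard with ⟨i, hiS, hiF⟩ | ⟨i, hiS, j, hjS, hij, hijeq⟩
      · obtain ⟨v, _, hv⟩ := Finset.mem_image.mp hiS
        apply hiF
        have : sec v ∈ T := hsecT v
        rw [← hv]
        simpa [hT] using this
      · obtain ⟨v, _, hv⟩ := Finset.mem_image.mp hiS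
        obtain ⟨w, _, hw⟩ := Finset.mem_image.mp hjS
        apply hij
        rw [← hv, ← hw]
        apply congrArg
        apply Subtype.ext
        rw [← hsect v, ← hsect w, hv, hw, hijeq]
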